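/- For an integer n ≥ 27 and each integer 0 ≤ J ≤ n, define λ^{(J)} = (n+1)·((n−1)!)²·(J²+J−n)² / ((n−J)!·(n+1+J)!). Then λ^{(⌊√(3n)⌋)} ≤ (49/9)·e^{−72/37}, while λ^{(1)} = (n−2)²/(n(n+2)) ≥ 625/783, and (49/9)·e^{−72/37} < 625/783; consequently λ^{(⌊√(3n)⌋)} < λ^{(1)}. -/

import Mathlib

open Finset

/-- The eigenvalues of the Berezin transform for the second-highest weight vector:
`λ⁽ᴶ⁾ = (n+1)·((n−1)!)²·(J²+J−n)² / ((n−J)!·(n+1+J)!)`. -/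
noncomputable def lamSH (n J : ℕ) : ℝ :=
  ((n : ℝ) + 1) * (((n - 1).factorial : ℝ)) ^ 2 * ((J : ℝ) ^ 2 + (J : ℝ) - (n : ℝ)) ^ 2 /
    (((n - J).factorial : ℝ) * ((n + 1 + J).factorial : ℝ))

lemma ascFactorial_eq_prod' (n : ℕ) : ∀ k, n.ascFactorial k = ∏ i ∈ range k, (n + i)
  | 0 => rfl
  | k + 1 => by
      rw [Nat.ascFactorial_succ, prod_range_succ, mul_comm, ascFactorial_eq_prod' n k]

lemma lamSH_eq_prod (n J : ℕ) (h1 : 1 ≤ J) (hJn : J ≤ n) :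
    lamSH n J = ((J : ℝ) ^ 2 + (J : ℝ) - (n : ℝ)) ^ 2 / ((n : ℝ) * ((n : ℝ) + 2)) *
      ∏ i ∈ range (J - 1), (((n : ℝ) - J + 1 + i) / ((n : ℝ) + 3 + i)) := by
  have hA : (n - J).factorial * (n - J + 1).ascFactorial (J - 1) = (n - 1).factorial := by
    have := Nat.factorial_mul_ascFactorial (n - J) (J - 1)
    rwa [show n - J + (J - 1) = n - 1 by omega] at this
  have hB : (n - 1).factorial * n.ascFactorial (J + 2) = (n + 1 + J).factorial := by
    have := Nat.factorial_mul_ascFactorial (n - 1) (J + 2)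
    rwa [show n - 1 + 1 = n by omega, show n - 1 + (J + 2) = n + 1 + J by omega] at this
  have hAr : ((n - J).factorial : ℝ) * ∏ i ∈ range (J - 1), ((n : ℝ) - J + 1 + i)
      = ((n - 1).factorial : ℝ) := by
    rw [← hA, ascFactorial_eq_prod', Nat.cast_mul, Nat.cast_prod]
    congr 1
    refine prod_congr rfl fun i _ => ?_
    push_cast [Nat.cast_sub hJn]
    ring
  have hBr : ((n - 1).factorial : ℝ) * ∏ i ∈ range (J + 2), ((n : ℝ) + i)
      = ((n + 1 + J).factorial : ℝ) := by
    rw [← hB, ascFactorial_eq_prod', Nat.cast_mul, Nat.cast_prod]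
    congr 1
    refine prod_congr rfl fun i _ => ?_
    push_cast
    ring
  have hsplit : ∏ i ∈ range (J + 2), ((n : ℝ) + i)
      = ((n : ℝ) * ((n : ℝ) + 1) * ((n : ℝ) + 2)) * ∏ i ∈ range (J - 1), ((n : ℝ) + 3 + i) := by
    rw [show J + 2 = 3 + (J - 1) by omega, prod_range_add]
    have h3 : ∏ i ∈ range 3, ((n : ℝ) + i) = (n : ℝ) * ((n : ℝ) + 1) * ((n : ℝ) + 2) := by
      simp [prod_range_succ]
    rw [h3]
    congr 1
    refine prod_congr rfl fun i _ => ?_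
    push_cast
    ring
  have hF : (0 : ℝ) < ((n - J).factorial : ℝ) := by exact_mod_cast Nat.factorial_pos _
  have hJnr : (J : ℝ) ≤ (n : ℝ) := by exact_mod_cast hJn
  have hApos : (0 : ℝ) < ∏ i ∈ range (J - 1), ((n : ℝ) - J + 1 + i) := by
    refine prod_pos fun i _ => ?_
    have : (0 : ℝ) ≤ (i : ℝ) := Nat.cast_nonneg i
    linarith
  have hCpos : (0 : ℝ) < ∏ i ∈ range (J - 1), ((n : ℝ) + 3 + i) := by
    refine prod_pos fun i _ => ?_
    have : (0 : ℝ) ≤ (i : ℝ) := Nat.cast_nonneg i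
    have : (0 : ℝ) ≤ (n : ℝ) := Nat.cast_nonneg n
    linarith
  have hn0 : (0 : ℝ) < (n : ℝ) := by
    have : (1 : ℝ) ≤ (n : ℝ) := by exact_mod_cast (h1.trans hJn)
    linarith
  rw [lamSH, ← hBr, ← hAr, hsplit, prod_div_distrib]
  field_simp

lemma lamSH_one (n : ℕ) (hn : 1 ≤ n) :
    lamSH n 1 = ((n : ℝ) - 2) ^ 2 / ((n : ℝ) * ((n : ℝ) + 2)) := by
  have hfac : (n + 1 + 1).factorial = (n + 2) * ((n + 1) * (n * (n - 1).factorial)) := by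
    rw [show n + 1 + 1 = n + 2 by ring, Nat.factorial_succ, Nat.factorial_succ,
      Nat.mul_factorial_pred (by omega)]
  have hF : (0 : ℝ) < ((n - 1).factorial : ℝ) := by exact_mod_cast Nat.factorial_pos _
  have hn0 : (0 : ℝ) < (n : ℝ) := by exact_mod_cast hn
  rw [lamSH, hfac]
  push_cast
  field_simp
  ring

lemma numeric_bound : (49 : ℝ) / 9 * Real.exp (-72 / 37) < 625 / 783 := by
  have e1 : (2.7182818283 : ℝ) < Real.exp 1 := Real.exp_one_gt_d9
  have hsplit : (-72 / 37 : ℝ) = 2 / 37 - (1 + 1) := by norm_num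
  have h237 : Real.exp (2 / 37) ≤ 37 / 35 := by
    have h := Real.add_one_le_exp (-(2 / 37) : ℝ)
    rw [Real.exp_neg] at h
    have hpos := Real.exp_pos (2 / 37 : ℝ)
    have h' : (35 / 37 : ℝ) ≤ (Real.exp (2 / 37))⁻¹ := by linarith
    rw [le_inv_comm₀ (by norm_num) hpos] at h'
    linarith [h']
  have hexp2 : (7.38905609 : ℝ) < Real.exp 1 * Real.exp 1 := by nlinarith
  rw [hsplit, Real.exp_sub, Real.exp_add]
  have hdiv : Real.exp (2 / 37) / (Real.exp 1 * Real.exp 1) ≤ (37 / 35) / 7.38905609 :=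
    div_le_div₀ (by norm_num) h237 (by norm_num) hexp2.le
  have : (49 : ℝ) / 9 * ((37 / 35) / 7.38905609) < 625 / 783 := by norm_num
  nlinarith [Real.exp_pos (2 / 37 : ℝ), Real.exp_pos (1 : ℝ)]

lemma lamSH_sqrt_bound (n : ℕ) (hn : 27 ≤ n) :
    lamSH n (Nat.sqrt (3 * n)) ≤ 49 / 9 * Real.exp (-72 / 37) := by
  set J := Nat.sqrt (3 * n) with hJdef
  have hJ9 : 9 ≤ J := Nat.le_sqrt.mpr (by omega)
  have hJsq : J ^ 2 ≤ 3 * n := Nat.sqrt_le' (3 * n)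
  have hlt : 3 * n < (J + 1) ^ 2 := Nat.lt_succ_sqrt' (3 * n)
  have h3J : 3 * J ≤ n := by nlinarith
  have hJn : J ≤ n := by omega
  have h1J : 1 ≤ J := by omega
  -- real versions
  have hJ9r : (9 : ℝ) ≤ (J : ℝ) := by exact_mod_cast hJ9
  have hJsqr : (J : ℝ) ^ 2 ≤ 3 * (n : ℝ) := by exact_mod_cast hJsq
  have hltr : 3 * (n : ℝ) ≤ (J : ℝ) ^ 2 + 2 * J := by
    have : 3 * n + 1 ≤ (J + 1) ^ 2 := hlt
    have := (Nat.cast_le (α := ℝ)).mpr this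
    push_cast at this
    nlinarith
  have h3Jr : 3 * (J : ℝ) ≤ (n : ℝ) := by exact_mod_cast h3J
  have hn0 : (0 : ℝ) < (n : ℝ) := by positivity
  rw [lamSH_eq_prod n J h1J hJn]
  have hQ : ((J : ℝ) ^ 2 + (J : ℝ) - (n : ℝ)) ^ 2 / ((n : ℝ) * ((n : ℝ) + 2)) ≤ 49 / 9 := by
    rw [div_le_iff₀ (by positivity)]
    nlinarith [mul_nonneg (by linarith : (0:ℝ) ≤ 3 * (n:ℝ) - (J:ℝ)^2)
        (by nlinarith : (0:ℝ) ≤ (n:ℝ) + (J:ℝ)^2 + 2*(J:ℝ)),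
      mul_nonneg (by linarith : (0:ℝ) ≤ (n:ℝ) - 3*(J:ℝ)) (by linarith : (0:ℝ) ≤ (J:ℝ)),
      mul_nonneg (by linarith : (0:ℝ) ≤ (n:ℝ) - 3*(J:ℝ)) (by linarith : (0:ℝ) ≤ (n:ℝ) - 3*(J:ℝ))]
  set c : ℝ := Real.exp (-(((J : ℝ) + 2) / ((n : ℝ) + J + 1))) with hc
  have hden : (0 : ℝ) < (n : ℝ) + J + 1 := by positivity
  have hterm : ∀ i ∈ range (J - 1), ((n : ℝ) - J + 1 + i) / ((n : ℝ) + 3 + i) ≤ c := by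
    intro i hi
    have hiJ : (i : ℝ) ≤ (J : ℝ) - 2 := by
      have : i ≤ J - 2 := by have := mem_range.mp hi; omega
      have := (Nat.cast_le (α := ℝ)).mpr this
      rw [Nat.cast_sub (by omega)] at this
      push_cast at this
      linarith
    have hdi : (0 : ℝ) < (n : ℝ) + 3 + i := by positivity
    have heq : ((n : ℝ) - J + 1 + i) / ((n : ℝ) + 3 + i)
        = 1 - ((J : ℝ) + 2) / ((n : ℝ) + 3 + i) := by
      field_simp
      ring
    have hle1 : 1 - ((J : ℝ) + 2) / ((n : ℝ) + 3 + i)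
        ≤ Real.exp (-(((J : ℝ) + 2) / ((n : ℝ) + 3 + i))) := by
      have := Real.add_one_le_exp (-(((J : ℝ) + 2) / ((n : ℝ) + 3 + i)))
      linarith
    have hle2 : Real.exp (-(((J : ℝ) + 2) / ((n : ℝ) + 3 + i))) ≤ c := by
      rw [hc, Real.exp_le_exp, neg_le_neg_iff]
      apply div_le_div_of_nonneg_left (by positivity) hdi
      linarith
    rw [heq]
    exact hle1.trans hle2
  have hnonneg : ∀ i ∈ range (J - 1), (0 : ℝ) ≤ ((n : ℝ) - J + 1 + i) / ((n : ℝ) + 3 + i) := by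
    intro i _
    have hJnr : (J : ℝ) ≤ (n : ℝ) := by exact_mod_cast hJn
    have : (0 : ℝ) ≤ (i : ℝ) := Nat.cast_nonneg i
    apply div_nonneg (by linarith) (by positivity)
  have hP : ∏ i ∈ range (J - 1), (((n : ℝ) - J + 1 + i) / ((n : ℝ) + 3 + i)) ≤ c ^ (J - 1) := by
    calc ∏ i ∈ range (J - 1), (((n : ℝ) - J + 1 + i) / ((n : ℝ) + 3 + i))
        ≤ ∏ _i ∈ range (J - 1), c := prod_le_prod hnonneg hterm
      _ = c ^ (J - 1) := by rw [prod_const, card_range]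
  have hPexp : c ^ (J - 1) ≤ Real.exp (-72 / 37) := by
    rw [hc, ← Real.exp_nat_mul, Real.exp_le_exp]
    have hcast : ((J - 1 : ℕ) : ℝ) = (J : ℝ) - 1 := by
      rw [Nat.cast_sub h1J]; norm_num
    rw [hcast]
    have hkey : (72 : ℝ) / 37 ≤ (((J : ℝ) - 1) * ((J : ℝ) + 2)) / ((n : ℝ) + J + 1) := by
      rw [le_div_iff₀ hden]
      nlinarith [mul_nonneg (by linarith : (0:ℝ) ≤ (J:ℝ) - 9) (by linarith : (0:ℝ) ≤ (J:ℝ) - 9),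
        mul_nonneg (by linarith : (0:ℝ) ≤ (J:ℝ) - 9) (by linarith : (0:ℝ) ≤ (J:ℝ))]
    have : ((J : ℝ) - 1) * (-(((J : ℝ) + 2) / ((n : ℝ) + J + 1)))
        = -((((J : ℝ) - 1) * ((J : ℝ) + 2)) / ((n : ℝ) + J + 1)) := by ring
    rw [this]
    linarith
  have hPnonneg : (0 : ℝ) ≤ ∏ i ∈ range (J - 1), (((n : ℝ) - J + 1 + i) / ((n : ℝ) + 3 + i)) :=
    prod_nonneg hnonneg
  calc ((J : ℝ) ^ 2 + (J : ℝ) - (n : ℝ)) ^ 2 / ((n : ℝ) * ((n : ℝ) + 2)) *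
        ∏ i ∈ range (J - 1), (((n : ℝ) - J + 1 + i) / ((n : ℝ) + 3 + i))
      ≤ 49 / 9 * Real.exp (-72 / 37) := by
        apply mul_le_mul hQ (hP.trans hPexp) hPnonneg (by norm_num)

theorem lamSH_sqrt_three_n_lt_lamSH_one (n : ℕ) (hn : 27 ≤ n) :
    lamSH n (Nat.sqrt (3 * n)) ≤ 49 / 9 * Real.exp (-72 / 37)
    ∧ lamSH n 1 = ((n : ℝ) - 2) ^ 2 / ((n : ℝ) * ((n : ℝ) + 2))
    ∧ 625 / 783 ≤ lamSH n 1
    ∧ (49 : ℝ) / 9 * Real.exp (-72 / 37) < 625 / 783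
    ∧ lamSH n (Nat.sqrt (3 * n)) < lamSH n 1 := by
  have h1 := lamSH_sqrt_bound n hn
  have h2 := lamSH_one n (by omega)
  have hnr : (27 : ℝ) ≤ (n : ℝ) := by exact_mod_cast hn
  have h3 : (625 : ℝ) / 783 ≤ lamSH n 1 := by
    rw [h2, le_div_iff₀ (by positivity)]
    nlinarith [mul_nonneg (by linarith : (0:ℝ) ≤ (n:ℝ) - 27) (by linarith : (0:ℝ) ≤ 158*(n:ℝ) - 116)]
  have h4 := numeric_bound
  exact ⟨h1, h2, h3, h4, lt_of_le_of_lt h1 (lt_of_lt_of_le h4 h3)⟩
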